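/- arXiv:2507.20652 — 2 statements merged into one kernel-verified Lean document; each statement's English description precedes it below -/
import Mathlib

section
/- Let ψ(x) = B₀x + b₀ + φ(x) with φ Lipschitz with constant L < σ_min(B₀), and let x* satisfy ψ(x*) = 0. Then for all x ∈ ℝⁿ: ‖ψ(x)‖/(‖B₀‖ + L) ≤ ‖x − x*‖ ≤ ‖ψ(x)‖/(σ_min(B₀) − L). -/
noncomputable def mApp {n : ℕ} (B : Matrix (Fin n) (Fin n) ℝ) (x : EuclideanSpace ℝ (Fin n)) :
    EuclideanSpace ℝ (Fin n) := Matrix.toEuclideanCLM (𝕜 := ℝ) B x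

noncomputable def specNorm {n : ℕ} (B : Matrix (Fin n) (Fin n) ℝ) : ℝ :=
  ‖Matrix.toEuclideanCLM (𝕜 := ℝ) B‖

noncomputable def sigmaMin {n : ℕ} (B : Matrix (Fin n) (Fin n) ℝ) : ℝ :=
  sInf {r : ℝ | ∃ v : EuclideanSpace ℝ (Fin n), ‖v‖ = 1 ∧ r = ‖mApp B v‖}

def vabs {n : ℕ} (v : EuclideanSpace ℝ (Fin n)) : EuclideanSpace ℝ (Fin n) := WithLp.toLp 2 (fun i => |v i|)

lemma sigmaMin_le_aux {n : ℕ} (B : Matrix (Fin n) (Fin n) ℝ) (v : EuclideanSpace ℝ (Fin n)) :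
    sigmaMin B * ‖v‖ ≤ ‖mApp B v‖ := by
  rcases eq_or_ne v 0 with rfl | hv
  · simp [mApp]
  · have hnv : (0:ℝ) < ‖v‖ := norm_pos_iff.mpr hv
    set u : EuclideanSpace ℝ (Fin n) := ‖v‖⁻¹ • v with hu
    have hun : ‖u‖ = 1 := by
      rw [hu, norm_smul, norm_inv, norm_norm, inv_mul_cancel₀ hnv.ne']
    have hmem : ‖mApp B u‖ ∈ {r : ℝ | ∃ w : EuclideanSpace ℝ (Fin n), ‖w‖ = 1 ∧ r = ‖mApp B w‖} :=
      ⟨u, hun, rfl⟩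
    have hbdd : BddBelow {r : ℝ | ∃ w : EuclideanSpace ℝ (Fin n), ‖w‖ = 1 ∧ r = ‖mApp B w‖} :=
      ⟨0, fun r ⟨w, _, hr⟩ => hr ▸ norm_nonneg _⟩
    have h1 : sigmaMin B ≤ ‖mApp B u‖ := csInf_le hbdd hmem
    have h2 : ‖mApp B u‖ = ‖v‖⁻¹ * ‖mApp B v‖ := by
      rw [hu]
      simp only [mApp, map_smul, norm_smul, norm_inv, norm_norm]
    rw [h2] at h1
    have := mul_le_mul_of_nonneg_right h1 hnv.le
    calc sigmaMin B * ‖v‖ ≤ ‖v‖⁻¹ * ‖mApp B v‖ * ‖v‖ := this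
      _ = ‖mApp B v‖ := by field_simp

theorem stmt_8 {n : ℕ} (B₀ : Matrix (Fin n) (Fin n) ℝ) (b₀ : EuclideanSpace ℝ (Fin n))
    (φ : EuclideanSpace ℝ (Fin n) → EuclideanSpace ℝ (Fin n)) (L : ℝ)
    (hφ : ∀ x y, ‖φ x - φ y‖ ≤ L * ‖x - y‖) (hσ : L < sigmaMin B₀)
    (ψ : EuclideanSpace ℝ (Fin n) → EuclideanSpace ℝ (Fin n))
    (hψ : ∀ x, ψ x = mApp B₀ x + b₀ + φ x)
    (xs : EuclideanSpace ℝ (Fin n)) (hxs : ψ xs = 0) :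
    ∀ x : EuclideanSpace ℝ (Fin n),
      ‖ψ x‖ / (specNorm B₀ + L) ≤ ‖x - xs‖ ∧
        ‖x - xs‖ ≤ ‖ψ x‖ / (sigmaMin B₀ - L) := by
  intro x
  rcases Nat.eq_zero_or_pos n with hn | hn
  · subst hn
    have hx : x = xs := Subsingleton.elim _ _
    subst hx
    simp [hxs]
  · -- n > 0
    have hL : 0 ≤ L := by
      set e : EuclideanSpace ℝ (Fin n) := EuclideanSpace.single ⟨0, hn⟩ (1:ℝ) with he
      have hne : ‖e - 0‖ = 1 := by
        rw [sub_zero, he, EuclideanSpace.norm_single, norm_one]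
      have := (norm_nonneg (φ e - φ 0)).trans (hφ e 0)
      rw [hne, mul_one] at this
      exact this
    -- key decomposition
    have hpsi : ψ x = mApp B₀ (x - xs) + (φ x - φ xs) := by
      have h0 := hψ xs
      rw [hxs] at h0
      rw [hψ x]
      have : mApp B₀ (x - xs) = mApp B₀ x - mApp B₀ xs := by
        simp [mApp, map_sub]
      rw [this]
      have hb : b₀ = -(mApp B₀ xs) - φ xs := by
        have := h0.symm
        linear_combination (norm := module) this
      rw [hb]
      module
    set c := φ x - φ xs with hc
    set d := x - xs with hd
    have hcL : ‖c‖ ≤ L * ‖d‖ := hφ x xs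
    have hop : ‖mApp B₀ d‖ ≤ specNorm B₀ * ‖d‖ :=
      (Matrix.toEuclideanCLM (𝕜 := ℝ) B₀).le_opNorm d
    have hσd : sigmaMin B₀ * ‖d‖ ≤ ‖mApp B₀ d‖ := sigmaMin_le_aux B₀ d
    have hup : ‖ψ x‖ ≤ (specNorm B₀ + L) * ‖d‖ := by
      rw [hpsi]
      calc ‖mApp B₀ d + c‖ ≤ ‖mApp B₀ d‖ + ‖c‖ := norm_add_le _ _
        _ ≤ specNorm B₀ * ‖d‖ + L * ‖d‖ := add_le_add hop hcL
        _ = (specNorm B₀ + L) * ‖d‖ := by ring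
    have hlow : (sigmaMin B₀ - L) * ‖d‖ ≤ ‖ψ x‖ := by
      have h1 : ‖mApp B₀ d‖ ≤ ‖ψ x‖ + ‖c‖ := by
        calc ‖mApp B₀ d‖ = ‖(mApp B₀ d + c) - c‖ := by rw [add_sub_cancel_right]
          _ ≤ ‖mApp B₀ d + c‖ + ‖c‖ := norm_sub_le _ _
          _ = ‖ψ x‖ + ‖c‖ := by rw [hpsi]
      nlinarith [hσd, hcL]
    -- specNorm B₀ > 0
    have hσpos : 0 < sigmaMin B₀ - L := sub_pos.mpr hσ
    have hspec : sigmaMin B₀ ≤ specNorm B₀ := by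
      set e : EuclideanSpace ℝ (Fin n) := EuclideanSpace.single ⟨0, hn⟩ (1:ℝ) with he
      have hne : ‖e‖ = 1 := by rw [he, EuclideanSpace.norm_single, norm_one]
      have h1 : sigmaMin B₀ * ‖e‖ ≤ ‖mApp B₀ e‖ := sigmaMin_le_aux B₀ e
      have h2 : ‖mApp B₀ e‖ ≤ specNorm B₀ * ‖e‖ :=
        (Matrix.toEuclideanCLM (𝕜 := ℝ) B₀).le_opNorm e
      rw [hne, mul_one] at h1 h2
      exact h1.trans h2
    have hden : 0 < specNorm B₀ + L := by
      have : 0 < specNorm B₀ := lt_of_le_of_lt hL (lt_of_lt_of_le hσ hspec)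
      linarith
    constructor
    · rw [div_le_iff₀ hden]
      linarith [hup]
    · rw [le_div_iff₀ hσpos]
      linarith [hlow]
end

section
/- Let A₀, A₁, A₂, Ω satisfy the assumptions guaranteeing the unique solution x* of min{A₀x+q₀, A₁x+q₁, A₂x+q₂} = 0 via the condition σ_min(2ΩA₀+A₁+A₂) > 2‖A₁−A₂‖ + ‖2ΩA₀−A₁−A₂‖. Then for all x ∈ ℝⁿ, ‖x − x*‖ ≤ ‖ψ(x)‖ / (σ_min(2ΩA₀+A₁+A₂) − 2‖A₁−A₂‖ − ‖2ΩA₀−A₁−A₂‖), where ψ(x) = −(2ΩA₀+A₁+A₂)x − |(A₁−A₂)x+q₁−q₂| − |(2ΩA₀−A₁−A₂)x + |(A₁−A₂)x+q₁−q₂| + 2Ωq₀−q₁−q₂| − (2Ωq₀+q₁+q₂) sign-adjusted so that ψ(x*) = 0 (equivalently, the residual of the absolute value reformulation). -/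
-- auxiliary lemmas

lemma mApp_add {n : ℕ} (B C : Matrix (Fin n) (Fin n) ℝ) (x : EuclideanSpace ℝ (Fin n)) :
    mApp (B + C) x = mApp B x + mApp C x := by
  simp [mApp, map_add]

lemma mApp_sub {n : ℕ} (B C : Matrix (Fin n) (Fin n) ℝ) (x : EuclideanSpace ℝ (Fin n)) :
    mApp (B - C) x = mApp B x - mApp C x := by
  simp [mApp, map_sub]

lemma mApp_sub_arg {n : ℕ} (B : Matrix (Fin n) (Fin n) ℝ) (x y : EuclideanSpace ℝ (Fin n)) :
    mApp B (x - y) = mApp B x - mApp B y := by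
  simp [mApp]

lemma mApp_norm_le {n : ℕ} (B : Matrix (Fin n) (Fin n) ℝ) (x : EuclideanSpace ℝ (Fin n)) :
    ‖mApp B x‖ ≤ specNorm B * ‖x‖ :=
  (Matrix.toEuclideanCLM (𝕜 := ℝ) B).le_opNorm x

lemma sigmaMin_nonneg {n : ℕ} (B : Matrix (Fin n) (Fin n) ℝ) : 0 ≤ sigmaMin B := by
  apply Real.sInf_nonneg
  rintro r ⟨v, _, rfl⟩
  exact norm_nonneg _

lemma sigmaMin_mul_le {n : ℕ} (B : Matrix (Fin n) (Fin n) ℝ) (x : EuclideanSpace ℝ (Fin n)) :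
    sigmaMin B * ‖x‖ ≤ ‖mApp B x‖ := by
  rcases eq_or_ne x 0 with rfl | hx
  · simp [mApp]
  · have hn : (0:ℝ) < ‖x‖ := norm_pos_iff.mpr hx
    have hmem : ‖mApp B x‖ / ‖x‖ ∈
        {r : ℝ | ∃ v : EuclideanSpace ℝ (Fin n), ‖v‖ = 1 ∧ r = ‖mApp B v‖} := by
      refine ⟨‖x‖⁻¹ • x, ?_, ?_⟩
      · simp [norm_smul, abs_of_pos hn, inv_mul_cancel₀ hn.ne']
      · simp [mApp, map_smul, norm_smul, abs_of_pos hn, div_eq_inv_mul]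
    have hbdd : BddBelow {r : ℝ | ∃ v : EuclideanSpace ℝ (Fin n), ‖v‖ = 1 ∧ r = ‖mApp B v‖} :=
      ⟨0, by rintro r ⟨v, _, rfl⟩; exact norm_nonneg _⟩
    have := csInf_le hbdd hmem
    rw [le_div_iff₀ hn] at this
    exact this

lemma vabs_lipschitz {n : ℕ} (u v : EuclideanSpace ℝ (Fin n)) :
    ‖vabs u - vabs v‖ ≤ ‖u - v‖ := by
  rw [EuclideanSpace.norm_eq, EuclideanSpace.norm_eq]
  apply Real.sqrt_le_sqrt
  apply Finset.sum_le_sum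
  intro i _
  have h1 : (vabs u - vabs v) i = |u i| - |v i| := by
    simp [vabs]
  have h2 : (u - v) i = u i - v i := by simp
  rw [h1, h2, Real.norm_eq_abs, Real.norm_eq_abs]
  have ha : |u i| - |v i| ≤ |u i - v i| := abs_sub_abs_le_abs_sub _ _
  have hb : -(|u i - v i|) ≤ |u i| - |v i| := by
    have := abs_sub_abs_le_abs_sub (v i) (u i)
    rw [abs_sub_comm] at this
    linarith
  have : |(|u i| - |v i|)| ≤ |u i - v i| := abs_le.mpr ⟨hb, ha⟩
  calc |(|u i| - |v i|)| ^ 2 ≤ |u i - v i| ^ 2 := by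
        apply pow_le_pow_left₀ (abs_nonneg _) this
    _ = _ := by rw [sq_abs, ← sq_abs]

lemma key_scalar (ω α β γ : ℝ) (hω : 0 < ω) (h : min α (min β γ) = 0) :
    2*ω*α + β + γ - |β - γ| - abs (2*ω*α - β - γ + |β - γ|) = 0 := by
  have hm : β + γ - |β - γ| = 2 * min β γ := by
    rcases le_total β γ with h' | h'
    · rw [abs_of_nonpos (by linarith), min_eq_left h']; ring
    · rw [abs_of_nonneg (by linarith), min_eq_right h']; ring
  set m := min β γ with hmdef
  have hα : 0 ≤ α := h ▸ min_le_left α m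
  have hm0 : 0 ≤ m := h ▸ min_le_right α m
  have hcase : α = 0 ∨ m = 0 := by
    rcases min_eq_iff.mp h with ⟨h1, _⟩ | ⟨h1, _⟩
    · exact Or.inl h1
    · exact Or.inr h1
  have hrw : 2*ω*α - β - γ + |β - γ| = 2*ω*α - 2*m := by linarith
  rw [hrw]
  have main : 2*ω*α + 2*m - |2*ω*α - 2*m| = 0 := by
    rcases hcase with h0 | h0
    · rw [h0, show 2*ω*0 - 2*m = -(2*m) by ring, abs_neg, abs_of_nonneg (by linarith)]; ring
    · have hprod : 0 ≤ 2*ω*α := by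
        have := mul_nonneg (mul_nonneg (by norm_num : (0:ℝ) ≤ 2) hω.le) hα
        linarith
      rw [h0, show 2*ω*α - 2*0 = 2*ω*α by ring, abs_of_nonneg hprod]; ring
  linarith

lemma key_scalar' (ω x0 x1 x2 p0 p1 p2 : ℝ) (hω : 0 < ω)
    (h : min (x0 + p0) (min (x1 + p1) (x2 + p2)) = 0) :
    2*(ω*x0) + x1 + x2 - |x1 - x2 + (p1 - p2)|
      - abs (2*(ω*x0) - x1 - x2 + |x1 - x2 + (p1 - p2)| + (2*(ω*p0) - p1 - p2))
      + (2*(ω*p0) + p1 + p2) = 0 := by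
  have h1 : x1 - x2 + (p1 - p2) = (x1+p1) - (x2+p2) := by ring
  rw [h1]
  have h2 : 2*(ω*x0) - x1 - x2 + |(x1+p1) - (x2+p2)| + (2*(ω*p0) - p1 - p2)
      = 2*ω*(x0+p0) - (x1+p1) - (x2+p2) + |(x1+p1) - (x2+p2)| := by ring
  rw [h2]
  have := key_scalar ω (x0+p0) (x1+p1) (x2+p2) hω h
  linarith

theorem stmt_14 {n : ℕ} (Ω A₀ A₁ A₂ : Matrix (Fin n) (Fin n) ℝ)
    (hdiag : Ω.IsDiag) (hpos : ∀ i, 0 < Ω i i)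
    (hσ : sigmaMin ((2 : ℝ) • (Ω * A₀) + A₁ + A₂) >
        2 * specNorm (A₁ - A₂) + specNorm ((2 : ℝ) • (Ω * A₀) - A₁ - A₂))
    (q₀ q₁ q₂ : EuclideanSpace ℝ (Fin n))
    (ψ : EuclideanSpace ℝ (Fin n) → EuclideanSpace ℝ (Fin n))
    (hψ : ∀ x, ψ x = mApp ((2 : ℝ) • (Ω * A₀) + A₁ + A₂) x
          - vabs (mApp (A₁ - A₂) x + (q₁ - q₂))
          - vabs (mApp ((2 : ℝ) • (Ω * A₀) - A₁ - A₂) x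
              + vabs (mApp (A₁ - A₂) x + (q₁ - q₂))
              + ((2 : ℝ) • mApp Ω q₀ - q₁ - q₂))
          + ((2 : ℝ) • mApp Ω q₀ + q₁ + q₂))
    (xs : EuclideanSpace ℝ (Fin n))
    (hxs : ∀ i, min ((mApp A₀ xs + q₀) i)
        (min ((mApp A₁ xs + q₁) i) ((mApp A₂ xs + q₂) i)) = 0) :
    ∀ x : EuclideanSpace ℝ (Fin n),
      ‖x - xs‖ ≤ ‖ψ x‖ / (sigmaMin ((2 : ℝ) • (Ω * A₀) + A₁ + A₂)
          - 2 * specNorm (A₁ - A₂) - specNorm ((2 : ℝ) • (Ω * A₀) - A₁ - A₂)) := by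
  intro x
  set M := (2 : ℝ) • (Ω * A₀) + A₁ + A₂ with hM
  set B := A₁ - A₂ with hB
  set C := (2 : ℝ) • (Ω * A₀) - A₁ - A₂ with hC
  -- diagonal multiplication lemmas
  have hdmul : ∀ (v : Fin n → ℝ) (i : Fin n), Ω.mulVec v i = Ω i i * v i := by
    intro v i
    rw [Matrix.mulVec, dotProduct]
    rw [Finset.sum_eq_single i]
    · intro j _ hj
      rw [hdiag (Ne.symm hj), zero_mul]
    · intro h; exact absurd (Finset.mem_univ i) h
  have hdiagmul : ∀ (v : EuclideanSpace ℝ (Fin n)) (i : Fin n),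
      mApp Ω v i = Ω i i * v i := fun v i => hdmul v i
  have hΩA : ∀ (v : EuclideanSpace ℝ (Fin n)) (i : Fin n),
      mApp (Ω * A₀) v i = Ω i i * mApp A₀ v i := by
    intro v i
    show (Ω * A₀).mulVec v i = Ω i i * A₀.mulVec v i
    rw [← Matrix.mulVec_mulVec]
    exact hdmul (A₀.mulVec v) i
  -- ψ xs = 0
  have hψxs : ψ xs = 0 := by
    rw [hψ]
    ext i
    have e1 : mApp M xs i = 2 * (Ω i i * mApp A₀ xs i) + mApp A₁ xs i + mApp A₂ xs i := by
      rw [hM, mApp_add, mApp_add]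
      have : mApp ((2:ℝ) • (Ω * A₀)) xs = (2:ℝ) • mApp (Ω * A₀) xs := by
        simp [mApp]
      simp only [PiLp.add_apply, this, PiLp.smul_apply, smul_eq_mul, hΩA]
    have e2 : mApp B xs i = mApp A₁ xs i - mApp A₂ xs i := by
      rw [hB, mApp_sub]; simp
    have e3 : mApp C xs i = 2 * (Ω i i * mApp A₀ xs i) - mApp A₁ xs i - mApp A₂ xs i := by
      rw [hC, mApp_sub, mApp_sub]
      have : mApp ((2:ℝ) • (Ω * A₀)) xs = (2:ℝ) • mApp (Ω * A₀) xs := by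
        simp [mApp]
      simp only [PiLp.sub_apply, this, PiLp.smul_apply, smul_eq_mul, hΩA]
    have hmin : min (mApp A₀ xs i + q₀ i)
        (min (mApp A₁ xs i + q₁ i) (mApp A₂ xs i + q₂ i)) = 0 := by
      simpa using hxs i
    show (mApp M xs - vabs (mApp B xs + (q₁ - q₂))
        - vabs (mApp C xs + vabs (mApp B xs + (q₁ - q₂)) + ((2:ℝ) • mApp Ω q₀ - q₁ - q₂))
        + ((2:ℝ) • mApp Ω q₀ + q₁ + q₂)) i = (0 : EuclideanSpace ℝ (Fin n)) i
    simp only [PiLp.add_apply, PiLp.sub_apply, PiLp.smul_apply, smul_eq_mul, vabs,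
      hdiagmul, PiLp.zero_apply]
    rw [e1, e2, e3]
    have hk := key_scalar' (Ω i i) (mApp A₀ xs i) (mApp A₁ xs i) (mApp A₂ xs i)
      (q₀ i) (q₁ i) (q₂ i) (hpos i) hmin
    linarith [hk]
  -- main estimate
  set δ := sigmaMin M - 2 * specNorm B - specNorm C with hδ
  have hδpos : 0 < δ := by rw [hδ]; linarith [hσ]
  set e := x - xs with he
  have hP : (mApp B x + (q₁ - q₂)) - (mApp B xs + (q₁ - q₂)) = mApp B e := by
    rw [he, mApp_sub_arg]; abel
  have hMe : mApp M e = mApp M x - mApp M xs := mApp_sub_arg M x xs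
  -- rearrange ψ x - ψ xs
  have hkey : sigmaMin M * ‖e‖ ≤ ‖ψ x‖ + 2 * specNorm B * ‖e‖ + specNorm C * ‖e‖ := by
    have h1 : sigmaMin M * ‖e‖ ≤ ‖mApp M e‖ := sigmaMin_mul_le M e
    set Px := mApp B x + (q₁ - q₂) with hPx
    set Pxs := mApp B xs + (q₁ - q₂) with hPxs
    set Qx := mApp C x + vabs Px + ((2:ℝ) • mApp Ω q₀ - q₁ - q₂) with hQx
    set Qxs := mApp C xs + vabs Pxs + ((2:ℝ) • mApp Ω q₀ - q₁ - q₂) with hQxs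
    have hψx : ψ x = mApp M x - vabs Px - vabs Qx + ((2:ℝ) • mApp Ω q₀ + q₁ + q₂) := hψ x
    have hψxs' : mApp M xs - vabs Pxs - vabs Qxs + ((2:ℝ) • mApp Ω q₀ + q₁ + q₂) = 0 := by
      rw [← hψ xs]; exact hψxs
    have hMdiff : mApp M e = ψ x + (vabs Px - vabs Pxs) + (vabs Qx - vabs Qxs) := by
      rw [hMe, hψx]
      have := hψxs'
      have hMxs : mApp M xs = vabs Pxs + vabs Qxs - ((2:ℝ) • mApp Ω q₀ + q₁ + q₂) := by
        have := hψxs'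
        apply eq_of_sub_eq_zero
        rw [← this]; abel
      rw [hMxs]; abel
    have hPdiff : ‖vabs Px - vabs Pxs‖ ≤ specNorm B * ‖e‖ := by
      calc ‖vabs Px - vabs Pxs‖ ≤ ‖Px - Pxs‖ := vabs_lipschitz _ _
        _ = ‖mApp B e‖ := by rw [hP]
        _ ≤ specNorm B * ‖e‖ := mApp_norm_le B e
    have hQdiff : ‖vabs Qx - vabs Qxs‖ ≤ specNorm C * ‖e‖ + specNorm B * ‖e‖ := by
      have hQQ : Qx - Qxs = mApp C e + (vabs Px - vabs Pxs) := by
        rw [hQx, hQxs, he, mApp_sub_arg]; abel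
      calc ‖vabs Qx - vabs Qxs‖ ≤ ‖Qx - Qxs‖ := vabs_lipschitz _ _
        _ = ‖mApp C e + (vabs Px - vabs Pxs)‖ := by rw [hQQ]
        _ ≤ ‖mApp C e‖ + ‖vabs Px - vabs Pxs‖ := norm_add_le _ _
        _ ≤ specNorm C * ‖e‖ + specNorm B * ‖e‖ :=
            add_le_add (mApp_norm_le C e) hPdiff
    calc sigmaMin M * ‖e‖ ≤ ‖mApp M e‖ := h1
      _ = ‖ψ x + (vabs Px - vabs Pxs) + (vabs Qx - vabs Qxs)‖ := by rw [hMdiff]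
      _ ≤ ‖ψ x‖ + ‖vabs Px - vabs Pxs‖ + ‖vabs Qx - vabs Qxs‖ := by
          exact le_trans (norm_add_le _ _) (by linarith [norm_add_le (ψ x + (vabs Px - vabs Pxs)) (vabs Qx - vabs Qxs), norm_add_le (ψ x) (vabs Px - vabs Pxs)])
      _ ≤ ‖ψ x‖ + specNorm B * ‖e‖ + (specNorm C * ‖e‖ + specNorm B * ‖e‖) :=
          add_le_add (add_le_add le_rfl hPdiff) hQdiff
      _ = ‖ψ x‖ + 2 * specNorm B * ‖e‖ + specNorm C * ‖e‖ := by ring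
  have : δ * ‖e‖ ≤ ‖ψ x‖ := by rw [hδ]; nlinarith [hkey]
  rw [le_div_iff₀ hδpos]
  linarith [this]
end
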